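/- Let $S_i = (A_i, B_i, C_i)$ and $S_j = (A_j, B_j, C_j)$ be discrete-time linear systems with $A_k \in \mathbb{R}^{n\times n}$, $B_k \in \mathbb{R}^{n\times m}$, $C_k \in \mathbb{R}^{p\times n}$. Fix sets $\Gamma \subseteq \{1,\dots,p\}$ with $|\Gamma| \leq 2\sigma$ and $\Delta_i, \Delta_j \subseteq \{1,\dots,m\}$ with $|\Delta_i|, |\Delta_j| \leq \rho$. Define the augmented matrices $A_{ij} = \mathrm{diag}(A_i, A_j) \in \mathbb{R}^{2n\times 2n}$, $B_{ij} = [B_i; B_j] \in \mathbb{R}^{2n\times m}$, $\widehat{B}_i = [\widetilde{B}_{i,\overline{\Delta}_i}; \mathbf{0}]$, $\widehat{B}_j = [\mathbf{0}; \widetilde{B}_{j,\overline{\Delta}_j}]$, $C_{ij} = [C_i \; -C_j] \in \mathbb{R}^{p\times 2n}$, and let $W^*$ be the maximal $(A_{ij}, \mathrm{Im}\,B_{ij} + \mathrm{Im}\,\widehat{B}_i + \mathrm{Im}\,\widehat{B}_j)$-controlled invariant subspace contained in $\ker(\overline{C}_{ij,\Gamma})$. Suppose $\mathrm{Im}\,B_{ij}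 + \mathrm{Im}\,\widehat{B}_i \subseteq W^* + \mathrm{Im}\,\widehat{B}_j$. Then $S_i$ and $S_j$ can be masked: for every input $u : \mathbb{N} \to \mathbb{R}^m$ and every actuator attack $v_i : \mathbb{N} \to \mathbb{R}^m$ with $\mathrm{supp}\,v_i(t) \subseteq \Delta_i$ for all $t$, there exist initial states $x_{0i}, x_{0j} \in \mathbb{R}^n$, an actuator attack $v_j : \mathbb{N} \to \mathbb{R}^m$ with $\mathrm{supp}\,v_j(t) \subseteq \Delta_j$ for all $t$, and cyclic $\sigma$-sparse sensor attacks $w_i, w_j : \mathbb{N} \to \mathbb{R}^p$, such that the trajectories $x_i(t+1) = A_i x_i(t) + B_i(u(t)+v_i(t))$, $x_i(0)=x_{0i}$, and $x_j(t+1) = A_j x_j(t) + B_j(u(t)+v_j(t))$, $x_j(0)=x_{0j}$, satisfy $C_i x_i(t) + w_i(t) = C_j x_j(t) + w_j(t)$ for all $t \in \mathbb{N}$. In particular, $S_i$ and $S_j$ are not $\sigma\rho$-securely distinguishable. -/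

import Mathlib

open Matrix

/-- The subspace of vectors of `ℝᵐ` whose support is contained in the index set `Δ`. -/
def suppIn {m : ℕ} (Δ : Finset (Fin m)) : Submodule ℝ (Fin m → ℝ) where
  carrier := {v | ∀ k ∉ Δ, v k = 0}
  add_mem' := by
    intro a b ha hb k hk
    simp only [Pi.add_apply, ha k hk, hb k hk, add_zero]
  zero_mem' := by intro k _; rfl
  smul_mem' := by
    intro c v hv k hk
    simp only [Pi.smul_apply, hv k hk, smul_zero]

/-- A sequence `w : ℕ → ℝᵖ` is cyclic `σ`-sparse if there is a fixed index set `Γ` of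
cardinality at most `σ` containing the support of `w t` for all `t`. -/
def CyclicSparse {p : ℕ} (σ : ℕ) (w : ℕ → Fin p → ℝ) : Prop :=
  ∃ Γ : Finset (Fin p), Γ.card ≤ σ ∧ ∀ t : ℕ, ∀ k ∉ Γ, w t k = 0

/-- The kernel of the matrix `C̄_{ij,Γ} = [C̄_{i,Γ}  -C̄_{j,Γ}]`, i.e. the pairs
`(xᵢ, xⱼ)` such that `Cᵢ xᵢ` and `Cⱼ xⱼ` agree on all rows not indexed by `Γ`. -/
def kerBar {n p : ℕ} (Ci Cj : Matrix (Fin p) (Fin n) ℝ) (Γ : Finset (Fin p)) :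
    Submodule ℝ ((Fin n → ℝ) × (Fin n → ℝ)) where
  carrier := {x | ∀ k ∉ Γ, Ci.mulVec x.1 k = Cj.mulVec x.2 k}
  add_mem' := by
    intro a b ha hb k hk
    simp only [Prod.fst_add, Prod.snd_add, Matrix.mulVec_add, Pi.add_apply,
      ha k hk, hb k hk]
  zero_mem' := by
    intro k _
    simp [Matrix.mulVec_zero]
  smul_mem' := by
    intro c a ha k hk
    simp only [Prod.smul_fst, Prod.smul_snd, Matrix.mulVec_smul, Pi.smul_apply,
      ha k hk]

/-- (Necessity half of Theorem 3.) With `W*` the maximal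
`(A_{ij}, Im B_{ij} + Im B̂ᵢ + Im B̂ⱼ)`-controlled invariant subspace contained in
`ker C̄_{ij,Γ}`, if `Im B_{ij} + Im B̂ᵢ ⊆ W* + Im B̂ⱼ` then `Sᵢ` and `Sⱼ` can be
masked: for every input `u` and every actuator attack `vᵢ` supported in `Δᵢ` there
are initial states, an actuator attack `vⱼ` supported in `Δⱼ`, and cyclic `σ`-sparse
sensor attacks `wᵢ, wⱼ` making the corrupted outputs coincide at all times. -/
theorem stmt_12 {n m p : ℕ} (σ ρ : ℕ)
    (Ai Aj : Matrix (Fin n) (Fin n) ℝ) (Bi Bj : Matrix (Fin n) (Fin m) ℝ)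
    (Ci Cj : Matrix (Fin p) (Fin n) ℝ)
    (Γ : Finset (Fin p)) (Δi Δj : Finset (Fin m))
    (hΓ : Γ.card ≤ 2 * σ) (hΔi : Δi.card ≤ ρ) (hΔj : Δj.card ≤ ρ)
    (Wstar : Submodule ℝ ((Fin n → ℝ) × (Fin n → ℝ)))
    -- `W*` is the maximal controlled invariant subspace contained in `ker C̄_{ij,Γ}`:
    (hWK : Wstar ≤ kerBar Ci Cj Γ)
    (hWinv : Submodule.map (LinearMap.prodMap Ai.mulVecLin Aj.mulVecLin) Wstar ≤
      Wstar ⊔ (LinearMap.range (Bi.mulVecLin.prod Bj.mulVecLin) ⊔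
        Submodule.map (LinearMap.inl ℝ (Fin n → ℝ) (Fin n → ℝ))
          (Submodule.map Bi.mulVecLin (suppIn Δi)) ⊔
        Submodule.map (LinearMap.inr ℝ (Fin n → ℝ) (Fin n → ℝ))
          (Submodule.map Bj.mulVecLin (suppIn Δj))))
    (hWmax : ∀ W' : Submodule ℝ ((Fin n → ℝ) × (Fin n → ℝ)), W' ≤ kerBar Ci Cj Γ →
      Submodule.map (LinearMap.prodMap Ai.mulVecLin Aj.mulVecLin) W' ≤
        W' ⊔ (LinearMap.range (Bi.mulVecLin.prod Bj.mulVecLin) ⊔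
          Submodule.map (LinearMap.inl ℝ (Fin n → ℝ) (Fin n → ℝ))
            (Submodule.map Bi.mulVecLin (suppIn Δi)) ⊔
          Submodule.map (LinearMap.inr ℝ (Fin n → ℝ) (Fin n → ℝ))
            (Submodule.map Bj.mulVecLin (suppIn Δj))) → W' ≤ Wstar)
    -- the inclusion `Im B_{ij} + Im B̂ᵢ ⊆ W* + Im B̂ⱼ`:
    (hIncl : LinearMap.range (Bi.mulVecLin.prod Bj.mulVecLin) ⊔
      Submodule.map (LinearMap.inl ℝ (Fin n → ℝ) (Fin n → ℝ))
        (Submodule.map Bi.mulVecLin (suppIn Δi)) ≤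
      Wstar ⊔ Submodule.map (LinearMap.inr ℝ (Fin n → ℝ) (Fin n → ℝ))
        (Submodule.map Bj.mulVecLin (suppIn Δj))) :
    ∀ (u vi : ℕ → Fin m → ℝ), (∀ t : ℕ, ∀ k ∉ Δi, vi t k = 0) →
      ∃ (x0i x0j : Fin n → ℝ) (vj : ℕ → Fin m → ℝ) (wi wj : ℕ → Fin p → ℝ)
        (xi xj : ℕ → Fin n → ℝ),
        (∀ t : ℕ, ∀ k ∉ Δj, vj t k = 0) ∧
        CyclicSparse σ wi ∧ CyclicSparse σ wj ∧
        xi 0 = x0i ∧ xj 0 = x0j ∧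
        (∀ t : ℕ, xi (t + 1) = Ai.mulVec (xi t) + Bi.mulVec (u t + vi t)) ∧
        (∀ t : ℕ, xj (t + 1) = Aj.mulVec (xj t) + Bj.mulVec (u t + vj t)) ∧
        ∀ t : ℕ, Ci.mulVec (xi t) + wi t = Cj.mulVec (xj t) + wj t := by

  classical
  intro u vi hvi
  set X := LinearMap.range (Bi.mulVecLin.prod Bj.mulVecLin) with hXdef
  set L := Submodule.map (LinearMap.inl ℝ (Fin n → ℝ) (Fin n → ℝ))
      (Submodule.map Bi.mulVecLin (suppIn Δi)) with hLdef
  set R := Submodule.map (LinearMap.inr ℝ (Fin n → ℝ) (Fin n → ℝ))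
      (Submodule.map Bj.mulVecLin (suppIn Δj)) with hRdef
  have hle : Wstar ⊔ (X ⊔ L ⊔ R) ≤ Wstar ⊔ R :=
    sup_le le_sup_left (sup_le hIncl le_sup_right)
  -- one-step lemma
  have hstep : ∀ x : (Fin n → ℝ) × (Fin n → ℝ), x ∈ Wstar → ∀ t : ℕ,
      ∃ d : Fin m → ℝ, (∀ k ∉ Δj, d k = 0) ∧
        (Ai.mulVec x.1 + Bi.mulVec (u t + vi t),
         Aj.mulVec x.2 + Bj.mulVec (u t + d)) ∈ Wstar := by
    intro x hx t
    have hy : (Ai.mulVec x.1, Aj.mulVec x.2) ∈ Wstar ⊔ R := by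
      have h := hle (hWinv (Submodule.mem_map_of_mem hx))
      simpa using h
    have hz1 : ((Bi.mulVec (u t), Bj.mulVec (u t)) : _ × _) ∈ X :=
      ⟨u t, rfl⟩
    have hz2 : ((Bi.mulVec (vi t), 0) : (Fin n → ℝ) × (Fin n → ℝ)) ∈ L :=
      ⟨Bi.mulVec (vi t), ⟨vi t, hvi t, rfl⟩, rfl⟩
    have hz : ((Bi.mulVec (u t + vi t), Bj.mulVec (u t)) : _ × _) ∈ Wstar ⊔ R := by
      have heq : ((Bi.mulVec (u t + vi t), Bj.mulVec (u t)) : (Fin n → ℝ) × (Fin n → ℝ))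
          = (Bi.mulVec (u t), Bj.mulVec (u t)) + (Bi.mulVec (vi t), 0) := by
        simp [Matrix.mulVec_add, Prod.ext_iff]
      rw [heq]
      exact hIncl (Submodule.add_mem_sup hz1 hz2)
    have hsum : ((Ai.mulVec x.1 + Bi.mulVec (u t + vi t),
        Aj.mulVec x.2 + Bj.mulVec (u t)) : _ × _) ∈ Wstar ⊔ R := by
      have h := add_mem hy hz
      simpa using h
    rw [Submodule.mem_sup] at hsum
    obtain ⟨w, hw, e, he, hwe⟩ := hsum
    obtain ⟨y, hy', rfl⟩ := he
    obtain ⟨d0, hd0, rfl⟩ := hy'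
    refine ⟨-d0, ?_, ?_⟩
    · intro k hk
      have : d0 k = 0 := hd0 k hk
      simp [this]
    · have h1 := congrArg Prod.fst hwe
      have h2 := congrArg Prod.snd hwe
      simp only [Prod.fst_add, Prod.snd_add, LinearMap.inr_apply,
        Matrix.mulVecLin_apply, add_zero] at h1 h2
      have hgoal : ((Ai.mulVec x.1 + Bi.mulVec (u t + vi t),
          Aj.mulVec x.2 + Bj.mulVec (u t + -d0)) : _ × _) = w := by
        refine Prod.ext ?_ ?_
        · exact h1.symm
        · have : w.2 = Aj.mulVec x.2 + Bj.mulVec (u t) - Bj.mulVec d0 :=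
            eq_sub_of_add_eq h2
          rw [this]
          simp [Matrix.mulVec_add, Matrix.mulVec_neg, sub_eq_add_neg, add_assoc]
      rw [hgoal]
      exact hw
  choose D hD1 hD2 using hstep
  let F : ℕ → {x : (Fin n → ℝ) × (Fin n → ℝ) // x ∈ Wstar} :=
    fun t => Nat.rec ⟨0, Wstar.zero_mem⟩
      (fun t p => ⟨(Ai.mulVec p.1.1 + Bi.mulVec (u t + vi t),
        Aj.mulVec p.1.2 + Bj.mulVec (u t + D p.1 p.2 t)), hD2 p.1 p.2 t⟩) t
  -- split Γ into two halves of size ≤ σ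
  obtain ⟨Γ1, hΓ1sub, hΓ1card⟩ :=
    Finset.exists_subset_card_eq (s := Γ) (n := min σ Γ.card) (min_le_right _ _)
  have hΓ1 : Γ1.card ≤ σ := by rw [hΓ1card]; exact min_le_left _ _
  have hΓ2 : (Γ \ Γ1).card ≤ σ := by
    rw [Finset.card_sdiff_of_subset hΓ1sub, hΓ1card]
    omega
  -- the output discrepancy
  set dd : ℕ → Fin p → ℝ :=
    fun t => Cj.mulVec (F t).1.2 - Ci.mulVec (F t).1.1 with hdd
  have hddΓ : ∀ t, ∀ k ∉ Γ, dd t k = 0 := by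
    intro t k hk
    have hker := hWK (F t).2
    have : Ci.mulVec (F t).1.1 k = Cj.mulVec (F t).1.2 k := hker k hk
    simp [hdd, this]
  refine ⟨0, 0, fun t => D (F t).1 (F t).2 t,
    fun t k => if k ∈ Γ1 then dd t k else 0,
    fun t k => if k ∈ Γ \ Γ1 then -(dd t k) else 0,
    fun t => (F t).1.1, fun t => (F t).1.2,
    fun t => hD1 (F t).1 (F t).2 t,
    ⟨Γ1, hΓ1, fun t k hk => if_neg hk⟩,
    ⟨Γ \ Γ1, hΓ2, fun t k hk => if_neg hk⟩,
    rfl, rfl, fun t => rfl, fun t => rfl, ?_⟩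
  intro t
  funext k
  simp only [Pi.add_apply]
  by_cases h1 : k ∈ Γ1
  · have h2 : k ∉ Γ \ Γ1 := fun h => (Finset.mem_sdiff.mp h).2 h1
    simp only [if_pos h1, if_neg h2, add_zero, hdd, Pi.sub_apply]
    ring
  · by_cases hΓk : k ∈ Γ
    · have h2 : k ∈ Γ \ Γ1 := Finset.mem_sdiff.mpr ⟨hΓk, h1⟩
      simp only [if_neg h1, if_pos h2, add_zero, hdd, Pi.sub_apply]
      ring
    · have h2 : k ∉ Γ \ Γ1 := fun h => hΓk (Finset.mem_sdiff.mp h).1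
      have hd0 := hddΓ t k hΓk
      simp only [if_neg h1, if_neg h2, add_zero]
      have : Cj.mulVec (F t).1.2 k - Ci.mulVec (F t).1.1 k = 0 := hd0
      linarith
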